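/- Let A ⊆ ℝⁿ be a nonempty closed set and let a ∈ ∂A (the boundary of A). Then the hybrid subdifferential of the distance function d_A at a is contained in the convex hull of the intersection of the limiting normal cone to A at a with the unit sphere: ∂^>d_A(a) ⊆ co(N_A(a) ∩ ∂𝔹). -/

import Mathlib

open Set MeasureTheory Filter Topology Metric
open scoped RealInnerProductSpace

noncomputable section

variable {H : Type*} [NormedAddCommGroup H] [InnerProductSpace ℝ H]

/-- The proximal normal cone to `A` at `x`. -/
def proxNormalCone (A : Set H) (x : H) : Set H :=
  {η | ∃ M > 0, ∀ y ∈ A, ⟪η, y - x⟫ ≤ M * ‖y - x‖ ^ 2}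

/-- The limiting normal cone to `A` at `x`. -/
def limitingNormalCone (A : Set H) (x : H) : Set H :=
  {η | ∃ xs ηs : ℕ → H, (∀ i, xs i ∈ A) ∧ (∀ i, ηs i ∈ proxNormalCone A (xs i)) ∧
    Tendsto xs atTop (𝓝 x) ∧ Tendsto ηs atTop (𝓝 η)}

/-- The hybrid subdifferential of `h` at `x`. -/
def hybridSubdiff [CompleteSpace H] (h : H → ℝ) (x : H) : Set H :=
  convexHull ℝ {γ | ∃ xs : ℕ → H, Tendsto xs atTop (𝓝 x) ∧
    Tendsto (fun i => h (xs i)) atTop (𝓝 (h x)) ∧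
    (∀ i, 0 < h (xs i)) ∧ (∀ i, DifferentiableAt ℝ h (xs i)) ∧
    Tendsto (fun i => gradient h (xs i)) atTop (𝓝 γ)}

/-- Key lemma: at a point of positive distance where the distance function is
differentiable, the gradient is a unit proximal normal at a closest point. -/
lemma gradient_infDist_aux {n : ℕ} (A : Set (EuclideanSpace ℝ (Fin n))) (hA : IsClosed A)
    (hAne : A.Nonempty) (x : EuclideanSpace ℝ (Fin n)) (hd : 0 < infDist x A)
    (hdiff : DifferentiableAt ℝ (fun y => infDist y A) x) :
    ∃ p ∈ A, dist p x = infDist x A ∧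
      ‖gradient (fun y => infDist y A) x‖ = 1 ∧
      gradient (fun y => infDist y A) x ∈ proxNormalCone A p := by
  set h : EuclideanSpace ℝ (Fin n) → ℝ := fun y => infDist y A with hh
  set d : ℝ := infDist x A with hdd
  obtain ⟨p, hpA, hpd⟩ := hA.exists_infDist_eq_dist hAne x
  set η : EuclideanSpace ℝ (Fin n) := gradient h x with hη
  have hgrad : HasGradientAt h η x := hdiff.hasGradientAt
  have hF : HasFDerivAt h (InnerProductSpace.toDual ℝ _ η) x := hgrad
  have hxp : ‖x - p‖ = d := by
    rw [← dist_eq_norm, hdd, hpd]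
  set u : EuclideanSpace ℝ (Fin n) := d⁻¹ • (x - p) with hu
  have hune : d ≠ 0 := ne_of_gt hd
  have hunorm : ‖u‖ = 1 := by
    rw [hu, norm_smul, hxp, norm_inv, Real.norm_eq_abs, abs_of_pos hd,
      inv_mul_cancel₀ hune]
  have hdu : d • u = x - p := by
    rw [hu, smul_smul, mul_inv_cancel₀ hune, one_smul]
  -- Lipschitz bound on the gradient norm
  have hlip : LipschitzWith 1 h := lipschitz_infDist_pt A
  have hnle : ‖η‖ ≤ 1 := by
    have h1 := norm_fderiv_le_of_lipschitz ℝ hlip (x₀ := x)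
    have h2 : ‖η‖ = ‖fderiv ℝ h x‖ :=
      (InnerProductSpace.toDual ℝ
        (EuclideanSpace ℝ (Fin n))).symm.norm_map (fderiv ℝ h x)
    rw [h2]
    simpa using h1
  -- directional derivative along -u
  have hc : HasDerivAt (fun t : ℝ => x - t • u) (-u) 0 := by
    have h1 : HasDerivAt (fun t : ℝ => t • u) ((1:ℝ) • u) 0 :=
      (hasDerivAt_id (0:ℝ)).smul_const u
    simpa using h1.const_sub x
  have hψ : HasDerivAt (fun t : ℝ => h (x - t • u)) ((InnerProductSpace.toDual ℝ _ η) (-u)) 0 := by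
    have hF' : HasFDerivAt h (InnerProductSpace.toDual ℝ _ η) ((fun t : ℝ => x - t • u) 0) := by
      simpa using hF
    have := hF'.comp_hasDerivAt 0 hc
    exact this
  have hψval : (InnerProductSpace.toDual ℝ _ η) (-u) = ⟪η, -u⟫ :=
    InnerProductSpace.toDual_apply_apply
  -- on [0, d), h (x - t • u) = d - t
  have heq : ∀ t : ℝ, 0 ≤ t → t ≤ d → h (x - t • u) = d - t := by
    intro t ht0 htd
    have hle : h (x - t • u) ≤ d - t := by
      have : x - t • u - p = (d - t) • u := by
        rw [sub_smul, hdu]; abel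
      calc h (x - t • u) ≤ dist (x - t • u) p := infDist_le_dist_of_mem hpA
        _ = ‖x - t • u - p‖ := dist_eq_norm _ _
        _ = ‖(d - t) • u‖ := by rw [this]
        _ = d - t := by
            rw [norm_smul, hunorm, mul_one, Real.norm_eq_abs,
              abs_of_nonneg (by linarith)]
    have hge : d - t ≤ h (x - t • u) := by
      have hnt : ‖x - t • u - x‖ = t := by
        rw [show x - t • u - x = -(t • u) by abel, norm_neg, norm_smul, hunorm,
          mul_one, Real.norm_eq_abs, abs_of_nonneg ht0]
      have hL' : |h (x - t • u) - h x| ≤ t := by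
        calc |h (x - t • u) - h x| = dist (h (x - t • u)) (h x) := (Real.dist_eq _ _).symm
          _ ≤ 1 * dist (x - t • u) x := hlip.dist_le_mul _ _
          _ = t := by rw [one_mul, dist_eq_norm, hnt]
      have hx0 : h x = d := rfl
      have := abs_le.1 hL'
      linarith [this.1]
    linarith
  -- the right derivative of t ↦ h (x - t • u) at 0 is -1
  have hψw : HasDerivWithinAt (fun t : ℝ => h (x - t • u)) (⟪η, -u⟫) (Set.Ici 0) 0 := by
    rw [← hψval]; exact hψ.hasDerivWithinAt
  have hgw : HasDerivWithinAt (fun t : ℝ => d - t) (-1 : ℝ) (Set.Ici 0) 0 := by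
    simpa using ((hasDerivAt_id (0:ℝ)).const_sub d).hasDerivWithinAt
  have hEE : (fun t : ℝ => h (x - t • u)) =ᶠ[𝓝[Set.Ici 0] (0:ℝ)] fun t => d - t := by
    filter_upwards [self_mem_nhdsWithin,
      mem_nhdsWithin_of_mem_nhds (Iio_mem_nhds hd)] with t ht1 ht2
    exact heq t ht1 (le_of_lt ht2)
  have hψw' : HasDerivWithinAt (fun t : ℝ => d - t) (⟪η, -u⟫) (Set.Ici 0) 0 := by
    refine hψw.congr_of_eventuallyEq hEE.symm ?_
    simp [heq 0 le_rfl (le_of_lt hd)]; rfl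
  have huniq : UniqueDiffWithinAt ℝ (Set.Ici (0:ℝ)) 0 := uniqueDiffOn_Ici 0 0 Set.self_mem_Ici
  have hderiv_eq : ⟪η, -u⟫ = (-1 : ℝ) := by
    rw [← hψw'.derivWithin huniq, hgw.derivWithin huniq]
  have hinner : ⟪η, u⟫ = 1 := by
    have := hderiv_eq
    rw [inner_neg_right] at this
    linarith
  -- η has norm 1 and equals u
  have hnη : ‖η‖ = 1 := by
    have hge : (1:ℝ) ≤ ‖η‖ := by
      have := real_inner_le_norm η u
      rw [hinner, hunorm, mul_one] at this
      linarith
    linarith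
  have hηu : η = u := by
    have : ⟪η, u⟫ = ‖η‖ * ‖u‖ := by rw [hinner, hnη, hunorm]; ring
    have h2 := (inner_eq_norm_mul_iff_real).1 this
    rw [hnη, hunorm, one_smul, one_smul] at h2
    exact h2
  refine ⟨p, hpA, by rw [dist_comm]; exact hpd.symm, hnη, ?_⟩
  -- proximal normal inequality
  refine ⟨d⁻¹ / 2, by positivity, fun y hy => ?_⟩
  have hkey : 2 * ⟪x - p, y - p⟫ ≤ ‖y - p‖ ^ 2 := by
    have h1 : ‖x - p‖ ≤ ‖x - y‖ := by
      rw [← dist_eq_norm, ← dist_eq_norm, ← hpd]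
      exact infDist_le_dist_of_mem hy
    have h2 : ‖x - y‖ ^ 2 = ‖(x - p) - (y - p)‖ ^ 2 := by ring_nf; rw [show x - y = x - p - (y - p) by abel]
    have h3 : ‖(x - p) - (y - p)‖ ^ 2 =
        ‖x - p‖ ^ 2 - 2 * ⟪x - p, y - p⟫ + ‖y - p‖ ^ 2 :=
      norm_sub_sq_real (x - p) (y - p)
    nlinarith [sq_nonneg (‖x - p‖), pow_le_pow_left₀ (norm_nonneg (x - p)) h1 2]
  rw [hηu, hu]
  rw [real_inner_smul_left]
  rw [div_eq_mul_inv, mul_comm (d⁻¹) (2:ℝ)⁻¹, mul_assoc]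
  have := mul_le_mul_of_nonneg_left hkey (by positivity : (0:ℝ) ≤ d⁻¹ * 2⁻¹)
  nlinarith [this]

/-- Proposition 2.1(i): for a nonempty closed set `A ⊆ ℝⁿ` and `a ∈ ∂A`, the hybrid
subdifferential of the distance function `d_A` at `a` is contained in the convex hull
of the unit limiting normal vectors: `∂^> d_A(a) ⊆ co (N_A(a) ∩ ∂𝔹)`. -/
theorem hybridSubdiff_dist_subset_convexHull_limitingNormalCone
    {n : ℕ} (A : Set (EuclideanSpace ℝ (Fin n))) (hA : IsClosed A) (hAne : A.Nonempty)
    (a : EuclideanSpace ℝ (Fin n)) (ha : a ∈ frontier A) :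
    hybridSubdiff (fun y => infDist y A) a ⊆
      convexHull ℝ (limitingNormalCone A a ∩ sphere (0 : EuclideanSpace ℝ (Fin n)) 1) := by
  have ha0 : infDist a A = 0 := by
    have : a ∈ A := by
      have := ha.1
      rwa [hA.closure_eq] at this
    exact infDist_zero_of_mem this
  refine Set.Subset.trans (le_of_eq rfl) (convexHull_mono ?_)
  rintro γ ⟨xs, hxs, hval, hpos, hdiff, hgrad⟩
  choose p hpA hpd hn1 hprox using fun i =>
    gradient_infDist_aux A hA hAne (xs i) (hpos i) (hdiff i)
  have hvals : Tendsto (fun i => infDist (xs i) A) atTop (𝓝 0) := by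
    simpa [ha0] using hval
  have hdista : Tendsto (fun i => dist (xs i) a) atTop (𝓝 0) :=
    (tendsto_iff_dist_tendsto_zero).1 hxs
  have hptend : Tendsto p atTop (𝓝 a) := by
    rw [tendsto_iff_dist_tendsto_zero]
    refine squeeze_zero (fun i => dist_nonneg) (fun i => ?_)
      (by simpa using hvals.add hdista)
    calc dist (p i) a ≤ dist (p i) (xs i) + dist (xs i) a := dist_triangle _ _ _
      _ = infDist (xs i) A + dist (xs i) a := by rw [hpd i]
  constructor
  · exact ⟨p, fun i => gradient (fun y => infDist y A) (xs i), hpA, hprox, hptend, hgrad⟩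
  · rw [mem_sphere_zero_iff_norm]
    have h1 : Tendsto (fun i => ‖gradient (fun y => infDist y A) (xs i)‖) atTop (𝓝 ‖γ‖) :=
      hgrad.norm
    have h2 : Tendsto (fun i => ‖gradient (fun y => infDist y A) (xs i)‖) atTop (𝓝 1) := by
      simpa [hn1] using tendsto_const_nhds (α := ℝ) (x := (1:ℝ)) (f := atTop (α := ℕ))
    exact tendsto_nhds_unique h1 h2
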